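/- Assume inf_{x,y∈S} κ(x,y) > 0, ∫_S e^{a ψ(x)} dμ(x) < ∞ for some a > 0 where ψ(x) = (∫_S κ(x,y)² dμ(y))^{1/2}, and ‖T_κ‖_HS < 1. Then there exist z > 1 and a μ-a.e. finite measurable function f ≥ 1 satisfying f = z·e^{T_κ[f−1]} μ-a.e. -/

import Mathlib

open MeasureTheory Filter Topology
open scoped ENNReal

/-- Extended exponential on `ℝ≥0∞`, with `eexp ⊤ = ⊤`. -/
noncomputable def eexp (t : ℝ≥0∞) : ℝ≥0∞ :=
  if t = ⊤ then ⊤ else ENNReal.ofReal (Real.exp t.toReal)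

/-- The nonlinear operator `Φ_{z,κ}[f](x) = z·exp(T_κ[f-1](x))`. -/
noncomputable def Phi {S : Type*} [MeasurableSpace S] (μ : Measure S)
    (κ : S → S → ℝ) (z : ℝ) (f : S → ℝ≥0∞) : S → ℝ≥0∞ :=
  fun x => ENNReal.ofReal z * eexp (∫⁻ y, ENNReal.ofReal (κ x y) * (f y - 1) ∂μ)

lemma eexp_mono {s t : ℝ≥0∞} (h : s ≤ t) : eexp s ≤ eexp t := by
  unfold eexp
  by_cases ht : t = ⊤
  · simp [ht]
  · have hs : s ≠ ⊤ := fun hs => ht (top_le_iff.mp (hs ▸ h))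
    rw [if_neg hs, if_neg ht]
    exact ENNReal.ofReal_le_ofReal (Real.exp_le_exp.mpr (ENNReal.toReal_mono ht h))

lemma eexp_ofReal {r : ℝ} (hr : 0 ≤ r) : eexp (ENNReal.ofReal r) = ENNReal.ofReal (Real.exp r) := by
  rw [eexp, if_neg ENNReal.ofReal_ne_top, ENNReal.toReal_ofReal hr]

lemma eexp_zero : eexp 0 = 1 := by
  rw [eexp, if_neg (by simp)]
  simp

lemma measurable_eexp : Measurable eexp := by
  unfold eexp
  exact Measurable.ite (show MeasurableSet {t : ℝ≥0∞ | t = ⊤} by simp [Set.setOf_eq_eq_singleton]) measurable_const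
    (ENNReal.measurable_ofReal.comp (Real.measurable_exp.comp ENNReal.measurable_toReal))

/-- Pointwise real inequality used to bound the `L²` norm of `e^{cψ}-1`. -/
lemma pointwise_exp_bound {a c t : ℝ} (ha : 0 < a) (hc : 0 < c) (hca : c ≤ a / 4)
    (ht : 0 ≤ t) :
    (Real.exp (c * t) - 1) ^ 2 ≤ c ^ 2 * t ^ 2 + c ^ 2 * (2 * c * (6 / a) ^ 3) * Real.exp (a * t) := by
  have aux : ∀ s : ℝ, Real.exp s - 1 ≤ s * Real.exp s := by
    intro s
    have h := Real.add_one_le_exp (-s)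
    have h2 := Real.exp_pos s
    have h3 : Real.exp (-s) * Real.exp s = 1 := by rw [← Real.exp_add]; simp
    nlinarith
  have hE1 : 1 ≤ Real.exp (c * t) := Real.one_le_exp (by positivity)
  have h1 := aux (c * t)
  have hctnn : 0 ≤ c * t := by positivity
  have hsq : (Real.exp (c * t) - 1) ^ 2 ≤ (c * t) ^ 2 * (Real.exp (c * t)) ^ 2 := by
    nlinarith [h1, hE1, Real.exp_pos (c * t)]
  have hexp2 : (Real.exp (c * t)) ^ 2 = Real.exp (2 * (c * t)) := by
    rw [sq, ← Real.exp_add]; ring_nf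
  have h2 := aux (2 * (c * t))
  have hle : Real.exp (2 * (c * t)) ≤ Real.exp (a * t / 2) := by
    apply Real.exp_le_exp.mpr; nlinarith
  have h3 : a * t ≤ 6 * Real.exp (a * t / 6) := by
    nlinarith [Real.add_one_le_exp (a * t / 6), Real.exp_pos (a * t / 6)]
  have h3' : t ≤ 6 / a * Real.exp (a * t / 6) := by
    rw [div_mul_eq_mul_div, le_div_iff₀ ha]; linarith
  have h5 : Real.exp (a * t / 2) * Real.exp (a * t / 2) = Real.exp (a * t) := by
    rw [← Real.exp_add]; ring_nf
  have h4 : t ^ 3 ≤ (6 / a) ^ 3 * Real.exp (a * t / 2) := by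
    calc t ^ 3 ≤ (6 / a * Real.exp (a * t / 6)) ^ 3 := pow_le_pow_left₀ ht h3' 3
      _ = (6 / a) ^ 3 * Real.exp (a * t / 2) := by
          rw [mul_pow, ← Real.exp_nat_mul]
          congr 2
          push_cast; ring
  have h4' : t ^ 3 * Real.exp (a * t / 2) ≤ (6 / a) ^ 3 * Real.exp (a * t) := by
    calc t ^ 3 * Real.exp (a * t / 2)
        ≤ (6 / a) ^ 3 * Real.exp (a * t / 2) * Real.exp (a * t / 2) :=
          mul_le_mul_of_nonneg_right h4 (Real.exp_pos _).le
      _ = (6 / a) ^ 3 * Real.exp (a * t) := by rw [mul_assoc, h5]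
  have k1 : t ^ 2 * Real.exp (2 * (c * t)) ≤ t ^ 2 + 2 * c * (t ^ 3 * Real.exp (a * t / 2)) := by
    nlinarith [mul_le_mul_of_nonneg_left h2 (sq_nonneg t),
      mul_le_mul_of_nonneg_left hle (by positivity : (0:ℝ) ≤ 2 * c * t ^ 3)]
  calc (Real.exp (c * t) - 1) ^ 2 ≤ (c * t) ^ 2 * (Real.exp (c * t)) ^ 2 := hsq
    _ = c ^ 2 * (t ^ 2 * Real.exp (2 * (c * t))) := by rw [hexp2]; ring
    _ ≤ c ^ 2 * (t ^ 2 + 2 * c * (t ^ 3 * Real.exp (a * t / 2))) := by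
        exact mul_le_mul_of_nonneg_left k1 (sq_nonneg c)
    _ ≤ c ^ 2 * (t ^ 2 + 2 * c * ((6 / a) ^ 3 * Real.exp (a * t))) := by
        have := mul_le_mul_of_nonneg_left h4' (by positivity : (0:ℝ) ≤ 2 * c)
        nlinarith [sq_nonneg c, this]
    _ = c ^ 2 * t ^ 2 + c ^ 2 * (2 * c * (6 / a) ^ 3) * Real.exp (a * t) := by ring

theorem stmt5 {S : Type*} [MeasurableSpace S] [MetricSpace S] [BorelSpace S]
    [TopologicalSpace.SeparableSpace S]
    (μ : Measure S) [IsProbabilityMeasure μ]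
    (κ : S → S → ℝ) (hκmeas : Measurable (Function.uncurry κ))
    (hκsymm : ∀ x y, κ x y = κ y x)
    (hκinf : ∃ b : ℝ, 0 < b ∧ ∀ x y, b ≤ κ x y)
    (hκ2 : ∀ x, Integrable (fun y => κ x y ^ 2) μ)
    (ψ : S → ℝ) (hψ : ∀ x, ψ x = Real.sqrt (∫ y, κ x y ^ 2 ∂μ))
    (a : ℝ) (ha : 0 < a)
    (hexp : Integrable (fun x => Real.exp (a * ψ x)) μ)
    (hHS : (∫⁻ x, ∫⁻ y, ENNReal.ofReal (κ x y) ^ 2 ∂μ ∂μ) ^ ((1 : ℝ) / 2) < 1) :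
    ∃ z : ℝ, 1 < z ∧ ∃ f : S → ℝ≥0∞, Measurable f ∧ (∀ x, 1 ≤ f x) ∧
      (∀ᵐ x ∂μ, f x ≠ ⊤) ∧ (∀ᵐ x ∂μ, Phi μ κ z f x = f x) := by
  obtain ⟨b, hb, hbκ⟩ := hκinf
  have hκnn : ∀ x y, 0 ≤ κ x y := fun x y => hb.le.trans (hbκ x y)
  have hψnn : ∀ x, 0 ≤ ψ x := fun x => (hψ x) ▸ Real.sqrt_nonneg _
  have hbψ : ∀ x, b ≤ ψ x := by
    intro x; rw [hψ x]
    have h1 : b ^ 2 ≤ ∫ y, κ x y ^ 2 ∂μ := by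
      have h2 : ∫ _y, (b : ℝ) ^ 2 ∂μ ≤ ∫ y, κ x y ^ 2 ∂μ :=
        integral_mono (integrable_const _) (hκ2 x) (fun y => by nlinarith [hbκ x y])
      simpa using h2
    calc b = Real.sqrt (b ^ 2) := by rw [Real.sqrt_sq hb.le]
      _ ≤ _ := Real.sqrt_le_sqrt h1
  -- the squared-kernel lintegral
  have hJmeas : Measurable (fun x => ∫⁻ y, (ENNReal.ofReal (κ x y)) ^ 2 ∂μ) :=
    Measurable.lintegral_prod_right' ((ENNReal.measurable_ofReal.comp hκmeas).pow_const 2)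
  have hJ : ∀ x, (∫⁻ y, (ENNReal.ofReal (κ x y)) ^ 2 ∂μ) = ENNReal.ofReal ((ψ x) ^ 2) := by
    intro x
    have h1 : ∀ y, (ENNReal.ofReal (κ x y)) ^ 2 = ENNReal.ofReal (κ x y ^ 2) := fun y =>
      (ENNReal.ofReal_pow (hκnn x y) 2).symm
    simp_rw [h1]
    rw [← ofReal_integral_eq_lintegral_ofReal (hκ2 x)
      (Filter.Eventually.of_forall fun y => sq_nonneg _), hψ x,
      Real.sq_sqrt (integral_nonneg fun y => sq_nonneg _)]
  have hψmeas : Measurable ψ := by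
    have heq : ψ = fun x => Real.sqrt ((∫⁻ y, (ENNReal.ofReal (κ x y)) ^ 2 ∂μ).toReal) := by
      funext x
      rw [hJ x, ENNReal.toReal_ofReal (sq_nonneg _), Real.sqrt_sq (hψnn x)]
    rw [heq]
    exact Real.continuous_sqrt.measurable.comp hJmeas.ennreal_toReal
  -- the Hilbert-Schmidt bound
  set Qe := ∫⁻ x, ENNReal.ofReal ((ψ x) ^ 2) ∂μ with hQedef
  have hQe1 : Qe < 1 := by
    have h0 : (∫⁻ x, ∫⁻ y, ENNReal.ofReal (κ x y) ^ 2 ∂μ ∂μ) = Qe := lintegral_congr fun x => hJ x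
    rw [h0] at hHS
    by_contra hcon
    push_neg at hcon
    have h2 : (1 : ℝ≥0∞) ≤ Qe ^ ((1 : ℝ) / 2) := by
      calc (1 : ℝ≥0∞) = 1 ^ ((1 : ℝ) / 2) := (ENNReal.one_rpow _).symm
        _ ≤ _ := ENNReal.rpow_le_rpow hcon (by norm_num)
    exact absurd hHS h2.not_gt
  have hQetop : Qe ≠ ⊤ := (hQe1.trans ENNReal.one_lt_top).ne
  set E := ∫⁻ x, ENNReal.ofReal (Real.exp (a * ψ x)) ∂μ with hEdef
  have hE : E = ENNReal.ofReal (∫ x, Real.exp (a * ψ x) ∂μ) :=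
    (ofReal_integral_eq_lintegral_ofReal hexp
      (Filter.Eventually.of_forall fun x => (Real.exp_pos _).le)).symm
  have hEtop : E ≠ ⊤ := by rw [hE]; exact ENNReal.ofReal_ne_top
  set qe := Qe.toReal with hqedef
  have hqe1 : qe < 1 := by
    have := (ENNReal.toReal_lt_toReal hQetop (ENNReal.one_ne_top)).mpr hQe1
    simpa using this
  have hqe0 : 0 ≤ qe := ENNReal.toReal_nonneg
  set e0 := E.toReal with he0def
  have he00 : 0 ≤ e0 := ENNReal.toReal_nonneg
  -- choice of c
  set c := min (a / 4) ((1 - qe) / (2 * (6 / a) ^ 3 * (e0 + 1))) with hcdef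
  have hden : 0 < 2 * (6 / a) ^ 3 * (e0 + 1) := by positivity
  have hc : 0 < c := lt_min (by positivity) (div_pos (by linarith) hden)
  have hca : c ≤ a / 4 := min_le_left _ _
  have hcnum : 2 * c * (6 / a) ^ 3 * e0 < 1 - qe := by
    have h1 : c ≤ (1 - qe) / (2 * (6 / a) ^ 3 * (e0 + 1)) := min_le_right _ _
    have h2 : c * (2 * (6 / a) ^ 3 * (e0 + 1)) ≤ 1 - qe := by
      rw [← le_div_iff₀ hden]; exact h1
    nlinarith [hc, pow_pos (by positivity : (0:ℝ) < 6 / a) 3]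
  -- the L² bound on e^{cψ}-1
  set Mq := ∫⁻ x, (ENNReal.ofReal (Real.exp (c * ψ x) - 1)) ^ 2 ∂μ with hMqdef
  have hMq : Mq < ENNReal.ofReal c ^ 2 := by
    have hpt : ∀ x, (ENNReal.ofReal (Real.exp (c * ψ x) - 1)) ^ 2 ≤
        ENNReal.ofReal (c ^ 2) * ENNReal.ofReal ((ψ x) ^ 2) +
        ENNReal.ofReal (c ^ 2 * (2 * c * (6 / a) ^ 3)) * ENNReal.ofReal (Real.exp (a * ψ x)) := by
      intro x
      rw [← ENNReal.ofReal_pow (by nlinarith [Real.one_le_exp (mul_nonneg hc.le (hψnn x))]),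
        ← ENNReal.ofReal_mul (sq_nonneg c), ← ENNReal.ofReal_mul (by positivity),
        ← ENNReal.ofReal_add (by positivity) (by positivity)]
      exact ENNReal.ofReal_le_ofReal (pointwise_exp_bound ha hc hca (hψnn x))
    have hb1 : Mq ≤ ENNReal.ofReal (c ^ 2) * Qe +
        ENNReal.ofReal (c ^ 2 * (2 * c * (6 / a) ^ 3)) * E := by
      calc Mq ≤ ∫⁻ x, (ENNReal.ofReal (c ^ 2) * ENNReal.ofReal ((ψ x) ^ 2) +
            ENNReal.ofReal (c ^ 2 * (2 * c * (6 / a) ^ 3)) * ENNReal.ofReal (Real.exp (a * ψ x))) ∂μ :=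
            lintegral_mono hpt
        _ = _ := by
            rw [lintegral_add_left (((hψmeas.pow_const 2).ennreal_ofReal).const_mul _),
              lintegral_const_mul _ ((hψmeas.pow_const 2).ennreal_ofReal),
              lintegral_const_mul _ (((hψmeas.const_mul a).exp).ennreal_ofReal)]
    have hb2 : ENNReal.ofReal (c ^ 2) * Qe +
        ENNReal.ofReal (c ^ 2 * (2 * c * (6 / a) ^ 3)) * E < ENNReal.ofReal c ^ 2 := by
      rw [← ENNReal.ofReal_toReal hQetop, ← ENNReal.ofReal_toReal hEtop, ← hqedef, ← he0def,
        ← ENNReal.ofReal_mul (sq_nonneg c), ← ENNReal.ofReal_mul (by positivity),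
        ← ENNReal.ofReal_add (by positivity) (by positivity),
        ← ENNReal.ofReal_pow hc.le]
      apply ENNReal.ofReal_lt_ofReal_iff (by positivity) |>.mpr
      nlinarith [mul_lt_mul_of_pos_left hcnum (by positivity : (0:ℝ) < c ^ 2), sq_nonneg c]
    exact hb1.trans_lt hb2
  set M := Mq ^ ((1 : ℝ) / 2) with hMdef
  have hMlt : M < ENNReal.ofReal c := by
    have h1 := ENNReal.rpow_lt_rpow hMq (by norm_num : (0:ℝ) < 1 / 2)
    have h2 : ((ENNReal.ofReal c) ^ 2) ^ ((1 : ℝ) / 2) = ENNReal.ofReal c := by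
      rw [← ENNReal.rpow_natCast (ENNReal.ofReal c) 2, ← ENNReal.rpow_mul]
      norm_num
    rwa [h2] at h1
  have hMtop : M ≠ ⊤ := (hMlt.trans ENNReal.ofReal_lt_top).ne
  set m := M.toReal with hmdef
  have hm0 : 0 ≤ m := ENNReal.toReal_nonneg
  have hmc : m < c := by
    have := (ENNReal.toReal_lt_toReal hMtop ENNReal.ofReal_ne_top).mpr hMlt
    rwa [ENNReal.toReal_ofReal hc.le] at this
  have hMm : M = ENNReal.ofReal m := (ENNReal.ofReal_toReal hMtop).symm
  -- the fixed-point constant z and supersolution G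
  set z := Real.exp ((c - m) * b) with hzdef
  have hz1 : 1 < z := by
    rw [hzdef, ← Real.exp_zero]
    exact Real.exp_lt_exp.mpr (by nlinarith)
  refine ⟨z, hz1, ?_⟩
  set G : S → ℝ≥0∞ := fun x => ENNReal.ofReal (Real.exp (c * ψ x)) with hGdef
  have hGone : ∀ x, 1 ≤ G x := fun x => by
    rw [hGdef, ← ENNReal.ofReal_one]
    exact ENNReal.ofReal_le_ofReal (Real.one_le_exp (mul_nonneg hc.le (hψnn x)))
  have hGtop : ∀ x, G x ≠ ⊤ := fun x => ENNReal.ofReal_ne_top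
  -- Cauchy-Schwarz key bound
  have hkey : ∀ (g : S → ℝ≥0∞), (∀ y, g y ≤ G y) → ∀ x,
      (∫⁻ y, ENNReal.ofReal (κ x y) * (g y - 1) ∂μ) ≤ ENNReal.ofReal (ψ x * m) := by
    intro g hg x
    have hsub : ∀ y, g y - 1 ≤ ENNReal.ofReal (Real.exp (c * ψ y) - 1) := by
      intro y
      refine (tsub_le_tsub_right (hg y) 1).trans (le_of_eq ?_)
      rw [hGdef, ← ENNReal.ofReal_one, ← ENNReal.ofReal_sub _ zero_le_one]
    have hκxmeas : Measurable fun y => ENNReal.ofReal (κ x y) :=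
      ENNReal.measurable_ofReal.comp hκmeas.of_uncurry_left
    have hgmeas : Measurable fun y => ENNReal.ofReal (Real.exp (c * ψ y) - 1) :=
      ENNReal.measurable_ofReal.comp ((Real.measurable_exp.comp (hψmeas.const_mul c)).sub
        measurable_const)
    calc (∫⁻ y, ENNReal.ofReal (κ x y) * (g y - 1) ∂μ)
        ≤ ∫⁻ y, ENNReal.ofReal (κ x y) * ENNReal.ofReal (Real.exp (c * ψ y) - 1) ∂μ :=
          lintegral_mono fun y => mul_le_mul_right (hsub y) _
      _ ≤ (∫⁻ y, ENNReal.ofReal (κ x y) ^ ((2:ℝ)) ∂μ) ^ ((1:ℝ)/2) *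
          (∫⁻ y, ENNReal.ofReal (Real.exp (c * ψ y) - 1) ^ ((2:ℝ)) ∂μ) ^ ((1:ℝ)/2) :=
          ENNReal.lintegral_mul_le_Lp_mul_Lq μ (Real.holderConjugate_iff.mpr ⟨by norm_num, by norm_num⟩)
            hκxmeas.aemeasurable hgmeas.aemeasurable
      _ = ENNReal.ofReal (ψ x) * M := by
          simp_rw [ENNReal.rpow_two]
          rw [hJ x]
          congr 1
          rw [ENNReal.ofReal_pow (hψnn x), ← ENNReal.rpow_natCast (ENNReal.ofReal (ψ x)) 2,
            ← ENNReal.rpow_mul]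
          norm_num
      _ = ENNReal.ofReal (ψ x * m) := by rw [hMm, ← ENNReal.ofReal_mul (hψnn x)]
  -- the supersolution property
  have hPhiG : ∀ g, (∀ y, g y ≤ G y) → ∀ x, Phi μ κ z g x ≤ G x := by
    intro g hg x
    have h2 : eexp (∫⁻ y, ENNReal.ofReal (κ x y) * (g y - 1) ∂μ) ≤
        ENNReal.ofReal (Real.exp (ψ x * m)) := by
      calc eexp (∫⁻ y, ENNReal.ofReal (κ x y) * (g y - 1) ∂μ)
          ≤ eexp (ENNReal.ofReal (ψ x * m)) := eexp_mono (hkey g hg x)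
        _ = ENNReal.ofReal (Real.exp (ψ x * m)) := eexp_ofReal (mul_nonneg (hψnn x) hm0)
    calc Phi μ κ z g x ≤ ENNReal.ofReal z * ENNReal.ofReal (Real.exp (ψ x * m)) :=
          mul_le_mul_right h2 _
      _ = ENNReal.ofReal (z * Real.exp (ψ x * m)) := by
          rw [ENNReal.ofReal_mul (by positivity)]
      _ ≤ G x := by
          rw [hGdef]
          apply ENNReal.ofReal_le_ofReal
          rw [hzdef, ← Real.exp_add]
          apply Real.exp_le_exp.mpr
          nlinarith [hbψ x, hmc, hm0]
  -- the iteration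
  set F : ℕ → S → ℝ≥0∞ := fun n => Nat.rec (fun _ => 1) (fun _ fn => Phi μ κ z fn) n with hFdef
  have hFmeas : ∀ n, Measurable (F n) := by
    intro n
    induction n with
    | zero => exact measurable_const
    | succ n ih =>
      show Measurable (Phi μ κ z (F n))
      have hI : Measurable fun x => ∫⁻ y, ENNReal.ofReal (κ x y) * (F n y - 1) ∂μ :=
        Measurable.lintegral_prod_right'
          ((ENNReal.measurable_ofReal.comp hκmeas).mul ((ih.comp measurable_snd).sub
            measurable_const))
      exact (measurable_eexp.comp hI).const_mul _
  have hmono1 : ∀ f g : S → ℝ≥0∞, (∀ y, f y ≤ g y) → ∀ x, Phi μ κ z f x ≤ Phi μ κ z g x := by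
    intro f g h x
    exact mul_le_mul_right (eexp_mono (lintegral_mono fun y =>
      mul_le_mul_right (tsub_le_tsub_right (h y) 1) _)) _
  have hPhi_one : ∀ x, Phi μ κ z (fun _ => 1) x = ENNReal.ofReal z := by
    intro x
    unfold Phi
    simp [eexp_zero]
  have hF01 : ∀ x, F 0 x ≤ F 1 x := by
    intro x
    show (1 : ℝ≥0∞) ≤ Phi μ κ z (fun _ => 1) x
    rw [hPhi_one, ← ENNReal.ofReal_one]
    exact ENNReal.ofReal_le_ofReal hz1.le
  have hFmono : ∀ n x, F n x ≤ F (n + 1) x := by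
    intro n
    induction n with
    | zero => exact hF01
    | succ n ih => exact fun x => hmono1 (F n) (F (n + 1)) ih x
  have hFmono' : ∀ x, Monotone fun n => F n x := fun x =>
    monotone_nat_of_le_succ (fun n => hFmono n x)
  have hFG : ∀ n x, F n x ≤ G x := by
    intro n
    induction n with
    | zero => exact fun x => hGone x
    | succ n ih => exact fun x => hPhiG (F n) ih x
  set f : S → ℝ≥0∞ := fun x => ⨆ n, F n x with hfdef
  have hfmeas : Measurable f := Measurable.iSup hFmeas
  have hfG : ∀ x, f x ≤ G x := fun x => iSup_le fun n => hFG n x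
  have hf1 : ∀ x, 1 ≤ f x := fun x => le_iSup_of_le 0 le_rfl
  have hfne : ∀ x, f x ≠ ⊤ := fun x => ((hfG x).trans_lt ENNReal.ofReal_lt_top).ne
  -- the fixed point property
  have hfix : ∀ x, Phi μ κ z f x = f x := by
    intro x
    set I : ℕ → ℝ≥0∞ := fun n => ∫⁻ y, ENNReal.ofReal (κ x y) * (F n y - 1) ∂μ with hIdef
    have hκxmeas : Measurable fun y => ENNReal.ofReal (κ x y) :=
      ENNReal.measurable_ofReal.comp hκmeas.of_uncurry_left
    have hImono : Monotone I := fun n n' h => lintegral_mono fun y =>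
      mul_le_mul_right (tsub_le_tsub_right ((hFmono' y) h) 1) _
    have hIsup : (∫⁻ y, ENNReal.ofReal (κ x y) * (f y - 1) ∂μ) = ⨆ n, I n := by
      have heq : ∀ y, ENNReal.ofReal (κ x y) * (f y - 1) =
          ⨆ n, ENNReal.ofReal (κ x y) * (F n y - 1) := by
        intro y
        rw [show f y - 1 = ⨆ n, (F n y - 1) from ENNReal.iSup_sub, ENNReal.mul_iSup]
      simp_rw [heq]
      exact lintegral_iSup (fun n => hκxmeas.mul ((hFmeas n).sub measurable_const))
        (fun n n' h => fun y => mul_le_mul_right (tsub_le_tsub_right ((hFmono' y) h) 1) _)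
    set It := ∫⁻ y, ENNReal.ofReal (κ x y) * (f y - 1) ∂μ with hItdef
    have hIle : ∀ n, I n ≤ It := fun n => hIsup ▸ le_iSup I n
    have hIttop : It ≠ ⊤ := ((hkey f hfG x).trans_lt ENNReal.ofReal_lt_top).ne
    have hIne : ∀ n, I n ≠ ⊤ := fun n => ((hIle n).trans_lt (lt_top_iff_ne_top.mpr hIttop)).ne
    have ht1 : Tendsto I atTop (𝓝 It) := hIsup ▸ tendsto_atTop_iSup hImono
    have ht2 : Tendsto (fun n => (I n).toReal) atTop (𝓝 It.toReal) :=
      (ENNReal.tendsto_toReal hIttop).comp ht1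
    have ht3 : Tendsto (fun n => eexp (I n)) atTop (𝓝 (eexp It)) := by
      have heq : ∀ n, eexp (I n) = ENNReal.ofReal (Real.exp (I n).toReal) := fun n =>
        if_neg (hIne n)
      rw [show eexp It = ENNReal.ofReal (Real.exp It.toReal) from if_neg hIttop]
      simp_rw [heq]
      exact (ENNReal.continuous_ofReal.tendsto _).comp ((Real.continuous_exp.tendsto _).comp ht2)
    have ht4 : Tendsto (fun n => eexp (I n)) atTop (𝓝 (⨆ n, eexp (I n))) :=
      tendsto_atTop_iSup (fun n n' h => eexp_mono (hImono h))
    have h5 : eexp It = ⨆ n, eexp (I n) := tendsto_nhds_unique ht3 ht4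
    calc Phi μ κ z f x = ENNReal.ofReal z * eexp It := rfl
      _ = ⨆ n, ENNReal.ofReal z * eexp (I n) := by rw [h5, ENNReal.mul_iSup]
      _ = ⨆ n, F (n + 1) x := rfl
      _ = f x := by
        apply le_antisymm
        · exact iSup_le fun n => le_iSup (fun n => F n x) (n + 1)
        · exact iSup_le fun n => (hFmono n x).trans (le_iSup (fun n => F (n + 1) x) n)
  exact ⟨f, hfmeas, hf1, ae_of_all μ hfne, ae_of_all μ hfix⟩
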